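/- Let S(t) be the heat semigroup on X = L²(0,π) given by S(t)x = Σₙ e^{-n²t}⟨x,φₙ⟩φₙ, and B_θ the multiplication by the indicator of a nonempty open set θ ⊂ (0,π). If B_θ S(T−t) ξ = 0 for all t ∈ [T−l, T] (with 0 < l ≤ T), then ξ = 0. -/

import Mathlib

set_option maxHeartbeats 2000000

open Real MeasureTheory Filter Topology Polynomial

namespace Stmt15Aux


noncomputable def W (n : ℕ) (s : ℝ) : ℝ := Real.exp (-((n:ℝ)+1)^2 * s)

lemma W_pos (n : ℕ) (s : ℝ) : 0 < W n s := Real.exp_pos _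

lemma summable_W {s : ℝ} (hs : 0 < s) : Summable (fun n => W n s) := by
  have hr : Real.exp (-s) < 1 := Real.exp_lt_one_iff.2 (by linarith)
  have hr0 : 0 ≤ Real.exp (-s) := (Real.exp_pos _).le
  refine Summable.of_nonneg_of_le (fun n => (W_pos n s).le)
    (fun n => ?_) (summable_geometric_of_lt_one hr0 hr)
  unfold W
  rw [← Real.exp_nat_mul]
  apply Real.exp_le_exp.2
  have h0 : (0:ℝ) ≤ (n:ℝ) := Nat.cast_nonneg n
  have h2 : (n:ℝ) ≤ ((n:ℝ)+1)^2 := by nlinarith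
  nlinarith [mul_nonneg (sub_nonneg.2 h2) hs.le]

lemma exp_eq_tsum' (x : ℝ) : Real.exp x = ∑' k : ℕ, x^k / (Nat.factorial k : ℝ) := by
  rw [Real.exp_eq_exp_ℝ, NormedSpace.exp_eq_tsum_div]

lemma ps_zero (p : ℕ → ℝ) {r : ℝ} (hr : 0 < r) (hsum : Summable fun k => |p k| * r^k)
    (hz : ∀ u ∈ Set.Ioc (0:ℝ) r, ∑' k, p k * u^k = 0) : ∀ j, p j = 0 := by
  have hr0 : r ≠ 0 := ne_of_gt hr
  have hshift : ∀ j, Summable fun k => |p (j+k)| * r^k := by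
    intro j
    have h1 : Summable fun k => |p (k+j)| * r^(k+j) := (summable_nat_add_iff j).2 hsum
    refine (h1.div_const (r^j)).congr fun k => ?_
    rw [Nat.add_comm k j, pow_add]
    field_simp
  have husum : ∀ j (u : ℝ), |u| ≤ r → Summable fun k => p (j+k) * u^k := by
    intro j u hu
    refine Summable.of_norm_bounded (hshift j) fun k => ?_
    rw [norm_mul, norm_pow]
    exact mul_le_mul_of_nonneg_left (pow_le_pow_left₀ (norm_nonneg u) hu k) (abs_nonneg _)
  set B : ℕ → ℝ := fun j => ∑' k, |p (j+k)| * r^k with hBdef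
  have hB0 : ∀ j, 0 ≤ B j := fun j =>
    tsum_nonneg fun k => mul_nonneg (abs_nonneg _) (pow_nonneg hr.le k)
  have hgB : ∀ j (u : ℝ), |u| ≤ r → |∑' k, p (j+k) * u^k| ≤ B j := by
    intro j u hu
    calc |∑' k, p (j+k) * u^k| ≤ ∑' k, |p (j+k) * u^k| := by
          simp only [← Real.norm_eq_abs]
          exact norm_tsum_le_tsum_norm ((husum j u hu).abs)
      _ ≤ B j := by
          refine Summable.tsum_le_tsum (fun k => ?_) ((husum j u hu).abs) (hshift j)
          rw [abs_mul, abs_pow]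
          exact mul_le_mul_of_nonneg_left (pow_le_pow_left₀ (abs_nonneg u) hu k) (abs_nonneg _)
  have hdec : ∀ j (u : ℝ), |u| ≤ r →
      (∑' k, p (j+k) * u^k) = p j + u * ∑' k, p (j+1+k) * u^k := by
    intro j u hu
    rw [Summable.tsum_eq_zero_add (husum j u hu)]
    simp only [Nat.add_zero, pow_zero, mul_one]
    congr 1
    rw [← tsum_mul_left]
    apply tsum_congr
    intro k
    have hidx : j + (k+1) = j+1+k := by omega
    rw [hidx, pow_succ]
    ring
  have hpj : ∀ j, (∀ u ∈ Set.Ioc (0:ℝ) r, (∑' k, p (j+k) * u^k) = 0) → p j = 0 := by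
    intro j hj
    have hb : ∀ u ∈ Set.Ioc (0:ℝ) r, |p j| ≤ u * (B (j+1)) := by
      intro u hu
      have habs : |u| ≤ r := by rw [abs_of_pos hu.1]; exact hu.2
      have h1 := hdec j u habs
      rw [hj u hu] at h1
      have h2 : p j = -(u * ∑' k, p (j+1+k) * u^k) := by linarith
      rw [h2, abs_neg, abs_mul, abs_of_pos hu.1]
      exact mul_le_mul_of_nonneg_left (hgB (j+1) u habs) hu.1.le
    have hle : |p j| ≤ 0 := by
      refine le_of_forall_pos_le_add fun ε hε => ?_
      set u : ℝ := min r (ε / (B (j+1) + 1)) with hu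
      have hu1 : 0 < u := lt_min hr (div_pos hε (by linarith [hB0 (j+1)]))
      have hu2 : u ∈ Set.Ioc (0:ℝ) r := ⟨hu1, min_le_left _ _⟩
      have := hb u hu2
      have hB1 : 0 < B (j+1) + 1 := by linarith [hB0 (j+1)]
      have : u * B (j+1) ≤ ε := by
        calc u * B (j+1) ≤ (ε / (B (j+1) + 1)) * B (j+1) :=
              mul_le_mul_of_nonneg_right (min_le_right _ _) (hB0 (j+1))
          _ ≤ ε := by
              rw [div_mul_eq_mul_div, div_le_iff₀ hB1]
              nlinarith [hB0 (j+1)]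
      linarith [hb u hu2]
    have := abs_nonneg (p j)
    have : |p j| = 0 := le_antisymm hle this
    exact abs_eq_zero.1 this
  have key : ∀ j, ∀ u ∈ Set.Ioc (0:ℝ) r, (∑' k, p (j+k) * u^k) = 0 := by
    intro j
    induction j with
    | zero => intro u hu; simpa using hz u hu
    | succ j ih =>
      have hpj0 : p j = 0 := hpj j ih
      intro u hu
      have habs : |u| ≤ r := by rw [abs_of_pos hu.1]; exact hu.2
      have h1 := hdec j u habs
      rw [ih u hu, hpj0, zero_add] at h1
      have hu0 : u ≠ 0 := ne_of_gt hu.1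
      have := (mul_eq_zero.1 h1.symm).resolve_left hu0
      simpa [Nat.add_comm] using this
  exact fun j => hpj j (key j)



lemma doubling (a : ℕ → ℝ) (C : ℝ) (hC : ∀ n, |a n| ≤ C) {s₀ : ℝ} (hs₀ : 0 < s₀)
    (hv : ∀ s ∈ Set.Ioc (0:ℝ) s₀, ∑' n, a n * W n s = 0) :
    ∀ s ∈ Set.Ioc (0:ℝ) (3/2 * s₀), ∑' n, a n * W n s = 0 := by
  classical
  set b : ℕ → ℝ := fun n => a n * W n s₀ with hbdef
  have hbb : ∀ n, |b n| ≤ C * W n s₀ := by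
    intro n
    rw [hbdef, abs_mul, abs_of_pos (W_pos n s₀)]
    exact mul_le_mul_of_nonneg_right (hC n) (W_pos n s₀).le
  set F : ℝ → ℕ × ℕ → ℝ :=
    fun u q => b q.1 * ((((q.1:ℝ)+1)^2 * u)^q.2 / (Nat.factorial q.2 : ℝ)) with hFdef
  have habsF : ∀ (u : ℝ) n k, |F u (n,k)| = |b n| * ((((n:ℝ)+1)^2 * |u|)^k / (Nat.factorial k : ℝ)) := by
    intro u n k
    rw [hFdef]
    simp only [abs_mul, abs_div, abs_pow, Nat.abs_cast]
    rw [abs_of_nonneg (show (0:ℝ) ≤ (n:ℝ)+1 by positivity)]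
  have hrowsum : ∀ (u : ℝ) n, (∑' k, |F u (n,k)|) =
      |b n| * Real.exp (((n:ℝ)+1)^2 * |u|) := by
    intro u n
    rw [exp_eq_tsum', ← tsum_mul_left]
    exact tsum_congr fun k => habsF u n k
  have habs : ∀ (u : ℝ), |u| ≤ s₀/2 → Summable fun q : ℕ × ℕ => |F u q| := by
    intro u hu
    rw [summable_prod_of_nonneg (fun q => abs_nonneg _)]
    constructor
    · intro n
      refine ((Real.summable_pow_div_factorial ((((n:ℝ)+1)^2 * |u|))).mul_left (|b n|)).congr
        fun k => (habsF u n k).symm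
    · refine Summable.of_nonneg_of_le (fun n => tsum_nonneg fun k => abs_nonneg _)
        (fun n => ?_) ((summable_W (by linarith : (0:ℝ) < s₀/2)).mul_left C)
      rw [hrowsum u n]
      have h1 : Real.exp (((n:ℝ)+1)^2 * |u|) ≤ Real.exp (((n:ℝ)+1)^2 * (s₀/2)) := by
        apply Real.exp_le_exp.2
        exact mul_le_mul_of_nonneg_left hu (by positivity)
      calc |b n| * Real.exp (((n:ℝ)+1)^2 * |u|)
          ≤ (C * W n s₀) * Real.exp (((n:ℝ)+1)^2 * (s₀/2)) := by
            apply mul_le_mul (hbb n) h1 (Real.exp_pos _).le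
            exact le_trans (abs_nonneg _) (hbb n)
        _ = C * W n (s₀/2) := by
            unfold W
            rw [mul_assoc, ← Real.exp_add]
            congr 2
            ring
  have hsumF : ∀ (u : ℝ), |u| ≤ s₀/2 → Summable (F u) :=
    fun u hu => summable_abs_iff.1 (habs u hu)
  have hrowF : ∀ (u : ℝ) n, (∑' k, F u (n,k)) = b n * Real.exp (((n:ℝ)+1)^2 * u) := by
    intro u n
    rw [exp_eq_tsum', ← tsum_mul_left]
  have hterm : ∀ (u : ℝ) n, a n * W n (s₀ - u) = ∑' k, F u (n,k) := by
    intro u n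
    rw [hrowF u n, hbdef]
    unfold W
    rw [mul_assoc, ← Real.exp_add]
    congr 2
    ring
  set M : ℕ → ℝ := fun k => ∑' n, b n * ((n:ℝ)+1)^(2*k) with hMdef
  set q : ℕ → ℝ := fun k => M k / (Nat.factorial k : ℝ) with hqdef
  have hcol : ∀ (u : ℝ), |u| ≤ s₀/2 → ∀ k, (∑' n, F u (n,k)) = q k * u^k := by
    intro u hu k
    have h1 : ∀ n, F u (n,k) = (b n * ((n:ℝ)+1)^(2*k)) * (u^k / (Nat.factorial k : ℝ)) := by
      intro n
      rw [hFdef]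
      simp only []
      rw [mul_pow, pow_mul]
      ring
    calc (∑' n, F u (n,k)) = ∑' n, (b n * ((n:ℝ)+1)^(2*k)) * (u^k / (Nat.factorial k : ℝ)) :=
          tsum_congr h1
      _ = M k * (u^k / (Nat.factorial k : ℝ)) := tsum_mul_right
      _ = q k * u^k := by rw [hqdef]; ring
  have hfull : ∀ (u : ℝ), |u| ≤ s₀/2 →
      (∑' n, a n * W n (s₀ - u)) = ∑' k, q k * u^k := by
    intro u hu
    have e1 : (∑' n, a n * W n (s₀ - u)) = ∑' (n) (k), F u (n,k) :=
      tsum_congr fun n => hterm u n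
    have e2 : ∑' (p : ℕ × ℕ), F u p = ∑' (n) (k), F u (n,k) :=
      Summable.tsum_prod' (hsumF u hu) (fun n => ((hsumF u hu)).prod_factor n)
    have e3 : ∑' (p : ℕ × ℕ), F u p = ∑' (k) (n), F u (n,k) := by
      rw [← (Equiv.prodComm ℕ ℕ).tsum_eq (F u)]
      exact Summable.tsum_prod' ((hsumF u hu).prod_symm)
        (fun k => ((hsumF u hu).prod_symm).prod_factor k)
    rw [e1, ← e2, e3]
    exact tsum_congr fun k => hcol u hu k
  have hqsum : Summable fun k => |q k| * (s₀/2)^k := by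
    have hu : |s₀/2| ≤ s₀/2 := by rw [abs_of_pos (by linarith)]
    have hcols : ∀ k, Summable fun n => |F (s₀/2) (n,k)| := by
      intro k
      exact ((habs _ hu).prod_symm).prod_factor k
    have hcolsum : Summable fun k => ∑' n, |F (s₀/2) (n,k)| := by
      have := (summable_prod_of_nonneg
        (f := fun p : ℕ × ℕ => |F (s₀/2) (p.2, p.1)|) (fun p => abs_nonneg _)).1
        ((habs _ hu).prod_symm) |>.2
      exact this
    refine Summable.of_nonneg_of_le
      (fun k => mul_nonneg (abs_nonneg _) (by positivity)) (fun k => ?_) hcolsum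
    have h1 : |q k| * (s₀/2)^k = |q k * (s₀/2)^k| := by
      rw [abs_mul, abs_of_nonneg (by positivity : (0:ℝ) ≤ (s₀/2)^k)]
    rw [h1, ← hcol _ hu k]
    calc |∑' n, F (s₀/2) (n,k)| ≤ ∑' n, |F (s₀/2) (n,k)| := by
          simp only [← Real.norm_eq_abs]
          exact norm_tsum_le_tsum_norm ((summable_abs_iff.1 (hcols k)).abs)
      _ ≤ _ := le_refl _
  have hq0 : ∀ k, q k = 0 := by
    refine ps_zero q (by linarith : (0:ℝ) < s₀/2) hqsum ?_
    intro u hu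
    have habs' : |u| ≤ s₀/2 := by rw [abs_of_pos hu.1]; exact hu.2
    rw [← hfull u habs']
    exact hv (s₀ - u) ⟨by linarith [hu.2], by linarith [hu.1]⟩
  intro s hs
  by_cases hss : s ≤ s₀
  · exact hv s ⟨hs.1, hss⟩
  · push_neg at hss
    have habs' : |s₀ - s| ≤ s₀/2 := by
      rw [abs_le]
      constructor <;> [linarith [hs.2]; linarith]
    have : s₀ - (s₀ - s) = s := by ring
    calc (∑' n, a n * W n s) = ∑' n, a n * W n (s₀ - (s₀ - s)) := by rw [this]
      _ = ∑' k, q k * (s₀ - s)^k := hfull (s₀ - s) habs'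
      _ = 0 := by
          simp only [hq0, zero_mul]
          exact tsum_zero


lemma vanish_all (a : ℕ → ℝ) (C : ℝ) (hC : ∀ n, |a n| ≤ C) {l : ℝ} (hl : 0 < l)
    (hv : ∀ s ∈ Set.Ioc (0:ℝ) l, ∑' n, a n * W n s = 0) :
    ∀ s : ℝ, 0 < s → ∑' n, a n * W n s = 0 := by
  have key : ∀ k : ℕ, ∀ s ∈ Set.Ioc (0:ℝ) ((3/2)^k * l), ∑' n, a n * W n s = 0 := by
    intro k
    induction k with
    | zero => simpa using hv
    | succ k ih =>
      have h := doubling a C hC (s₀ := (3/2)^k * l) (by positivity) ih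
      intro s hs
      refine h s ⟨hs.1, ?_⟩
      calc s ≤ (3/2)^(k+1) * l := hs.2
        _ = 3/2 * ((3/2)^k * l) := by ring
  intro s hs
  obtain ⟨k, hk⟩ := pow_unbounded_of_one_lt (s / l) (by norm_num : (1:ℝ) < 3/2)
  refine key k s ⟨hs, ?_⟩
  rw [div_lt_iff₀ hl] at hk
  linarith
lemma summable_aW (a : ℕ → ℝ) (C : ℝ) (hC : ∀ n, |a n| ≤ C) {s : ℝ} (hs : 0 < s) :
    Summable fun n => a n * W n s := by
  refine Summable.of_norm_bounded ((summable_W hs).mul_left C) fun n => ?_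
  rw [norm_mul, norm_of_nonneg (W_pos n s).le]
  exact mul_le_mul_of_nonneg_right (hC n) (W_pos n s).le

lemma coeff_zero (a : ℕ → ℝ) (C : ℝ) (hC : ∀ n, |a n| ≤ C)
    (hv : ∀ s : ℝ, 0 < s → ∑' n, a n * W n s = 0) : ∀ n, a n = 0 := by
  have hC0 : 0 ≤ C := le_trans (abs_nonneg _) (hC 0)
  intro m
  induction m using Nat.strong_induction_on with
  | _ m ih =>
  have hbound : ∀ s : ℝ, 0 < s → Real.exp (-s) ≤ 1/2 → |a m| ≤ 2*C*Real.exp (-s) := by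
    intro s hs hhalf
    have hsum := summable_aW a C hC hs
    have hsum2 : Summable fun k => a (k+m) * W (k+m) s :=
      (summable_nat_add_iff m).2 hsum
    have hsplit := Summable.sum_add_tsum_nat_add m hsum
    have hfin : (∑ i ∈ Finset.range m, a i * W i s) = 0 :=
      Finset.sum_eq_zero fun i hi => by
        rw [ih i (Finset.mem_range.1 hi), zero_mul]
    rw [hv s hs, hfin, zero_add] at hsplit
    -- hsplit : ∑' k, a (k+m) * W (k+m) s = 0
    have hzero := Summable.tsum_eq_zero_add hsum2
    rw [hsplit] at hzero
    have heq : a m * W m s = -∑' k, a (k+1+m) * W (k+1+m) s := by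
      have h' : a m * W m s + ∑' k, a (k+1+m) * W (k+1+m) s = 0 := by
        simpa [zero_add] using hzero.symm
      linarith
    have hsum3 : Summable fun k => a (k+1+m) * W (k+1+m) s := by
      have := (summable_nat_add_iff 1).2 hsum2
      exact this.congr fun k => by norm_num [Nat.add_assoc, Nat.add_comm 1 m]
    have hWle : ∀ k : ℕ, W (k+1+m) s ≤ W m s * Real.exp (-((k:ℝ)+1) * s) := by
      intro k
      unfold W
      rw [← Real.exp_add]
      apply Real.exp_le_exp.2
      have h0 : (0:ℝ) ≤ (k:ℝ) := Nat.cast_nonneg k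
      have h1 : (0:ℝ) ≤ (m:ℝ) := Nat.cast_nonneg m
      push_cast
      nlinarith [hs.le, mul_nonneg (mul_nonneg h0 h1) hs.le, mul_nonneg h0 hs.le,
        mul_nonneg h1 hs.le, sq_nonneg ((k:ℝ)+1), mul_nonneg (mul_nonneg h0 h0) hs.le]
    have hgeo : Summable fun k : ℕ => Real.exp (-((k:ℝ)+1) * s) := by
      have h := (summable_geometric_of_lt_one (Real.exp_pos (-s)).le
        (Real.exp_lt_one_iff.2 (by linarith))).mul_left (Real.exp (-s))
      refine h.congr fun k => ?_
      rw [← Real.exp_nat_mul, ← Real.exp_add]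
      congr 1
      ring
    have hgeosum : (∑' k : ℕ, Real.exp (-((k:ℝ)+1) * s)) ≤ 2 * Real.exp (-s) := by
      have hlt1 : Real.exp (-s) < 1 := Real.exp_lt_one_iff.2 (by linarith)
      have hval : (∑' k : ℕ, Real.exp (-((k:ℝ)+1) * s))
          = Real.exp (-s) * (1 - Real.exp (-s))⁻¹ := by
        rw [← tsum_geometric_of_lt_one (Real.exp_pos (-s)).le hlt1, ← tsum_mul_left]
        exact tsum_congr fun k => by
          rw [← Real.exp_nat_mul, ← Real.exp_add]
          congr 1
          ring
      rw [hval]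
      have h2 : (1:ℝ)/2 ≤ 1 - Real.exp (-s) := by linarith
      have h3 : (1 - Real.exp (-s))⁻¹ ≤ 2 := by
        rw [inv_le_comm₀ (by linarith) (by norm_num)]
        linarith
      calc Real.exp (-s) * (1 - Real.exp (-s))⁻¹ ≤ Real.exp (-s) * 2 :=
            mul_le_mul_of_nonneg_left h3 (Real.exp_pos _).le
        _ = 2 * Real.exp (-s) := by ring
    have hmain : |a m| * W m s ≤ C * W m s * (2 * Real.exp (-s)) := by
      calc |a m| * W m s = |a m * W m s| := by
            rw [abs_mul, abs_of_pos (W_pos m s)]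
        _ = |∑' k, a (k+1+m) * W (k+1+m) s| := by rw [heq, abs_neg]
        _ ≤ ∑' k, |a (k+1+m) * W (k+1+m) s| := by
            simp only [← Real.norm_eq_abs]
            exact norm_tsum_le_tsum_norm hsum3.abs
        _ ≤ ∑' k : ℕ, C * (W m s * Real.exp (-((k:ℝ)+1) * s)) := by
            refine Summable.tsum_le_tsum (fun k => ?_) hsum3.abs
              (((hgeo.mul_left (W m s)).mul_left C))
            rw [abs_mul, abs_of_pos (W_pos _ s)]
            exact mul_le_mul (hC _) (hWle k) (W_pos _ s).le hC0
        _ = C * (W m s * ∑' k : ℕ, Real.exp (-((k:ℝ)+1) * s)) := by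
            rw [← tsum_mul_left, ← tsum_mul_left]
        _ ≤ C * (W m s * (2 * Real.exp (-s))) := by
            refine mul_le_mul_of_nonneg_left ?_ hC0
            exact mul_le_mul_of_nonneg_left hgeosum (W_pos m s).le
        _ = C * W m s * (2 * Real.exp (-s)) := by ring
    have h6 : |a m| * W m s ≤ (2*C*Real.exp (-s)) * W m s := by
      calc |a m| * W m s ≤ C * W m s * (2 * Real.exp (-s)) := hmain
        _ = 2*C*Real.exp (-s) * W m s := by ring
    exact le_of_mul_le_mul_right h6 (W_pos m s)
  have htend : Tendsto (fun s : ℝ => 2*C*Real.exp (-s)) atTop (𝓝 0) := by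
    have := Real.tendsto_exp_neg_atTop_nhds_zero.const_mul (2*C)
    simpa using this
  have hev : ∀ᶠ s in atTop, |a m| ≤ 2*C*Real.exp (-s) := by
    filter_upwards [eventually_ge_atTop (Real.log 2), eventually_gt_atTop (0:ℝ)]
      with s hs1 hs2
    refine hbound s hs2 ?_
    have h5 : Real.exp (-s) ≤ Real.exp (-Real.log 2) := Real.exp_le_exp.2 (by linarith)
    rw [Real.exp_neg, Real.exp_neg, Real.exp_log (by norm_num : (0:ℝ) < 2)] at h5
    rw [Real.exp_neg]
    have h7 : (0:ℝ) < Real.exp s := Real.exp_pos s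
    rw [show ((2:ℝ))⁻¹ = 1/2 by norm_num] at h5
    linarith
  have : |a m| ≤ 0 := ge_of_tendsto htend hev
  exact abs_eq_zero.1 (le_antisymm this (abs_nonneg _))


lemma exists_sin_ne (θ : Set ℝ) (hopen : IsOpen θ) (hne : θ.Nonempty) (c : ℝ) (hc : c ≠ 0) :
    ∃ x ∈ θ, Real.sin (c * x) ≠ 0 := by
  by_contra hcon
  push_neg at hcon
  obtain ⟨x₀, hx₀⟩ := hne
  have hev : (fun x => Real.sin (c * x)) =ᶠ[nhds x₀] (fun _ => (0:ℝ)) := by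
    filter_upwards [hopen.mem_nhds hx₀] with x hx using hcon x hx
  have hd : HasDerivAt (fun x => Real.sin (c * x)) (Real.cos (c * x₀) * c) x₀ := by
    have h1 : HasDerivAt (fun x : ℝ => c * x) c x₀ := by
      simpa using (hasDerivAt_id x₀).const_mul c
    exact (Real.hasDerivAt_sin (c * x₀)).comp x₀ h1
  have hz : Real.cos (c * x₀) * c = 0 := by
    have h2 := hev.deriv_eq
    rw [hd.deriv] at h2
    simpa using h2
  have hcos : Real.cos (c * x₀) = 0 := by
    rcases mul_eq_zero.1 hz with h | h
    · exact h
    · exact absurd h hc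
  have hsin : Real.sin (c * x₀) = 0 := hcon x₀ hx₀
  have hpyth := Real.sin_sq_add_cos_sq (c * x₀)
  rw [hsin, hcos] at hpyth
  norm_num at hpyth

open Polynomial Polynomial.Chebyshev in
lemma U_deg (n : ℕ) : ((U ℝ (n:ℤ)).natDegree = n ∧ (U ℝ (n:ℤ)).coeff n = 2^n) := by
  induction n using Nat.strong_induction_on with
  | _ n ih =>
  match n with
  | 0 => simp [U_zero]
  | 1 => constructor <;> simp [U_one]
  | (n+2) =>
    obtain ⟨hd1, hc1⟩ := ih (n+1) (by omega)
    obtain ⟨hd0, hc0⟩ := ih n (by omega)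
    have hU2 : U ℝ ((n:ℤ)+2) = 2 * X * U ℝ ((n:ℤ)+1) - U ℝ (n:ℤ) := U_add_two ℝ n
    have hcast2 : ((n+2 : ℕ) : ℤ) = (n:ℤ)+2 := by push_cast; ring
    have hcast1 : ((n+1 : ℕ) : ℤ) = (n:ℤ)+1 := by push_cast; ring
    rw [hcast1] at hd1 hc1
    have hcoeff : (U ℝ ((n:ℤ)+2)).coeff (n+2) = 2^(n+2) := by
      rw [hU2, coeff_sub, mul_assoc, coeff_ofNat_mul, coeff_X_mul]
      rw [hc1, coeff_eq_zero_of_natDegree_lt (by omega : (U ℝ (n:ℤ)).natDegree < n+2)]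
      ring
    have hdegle : (U ℝ ((n:ℤ)+2)).natDegree ≤ n+2 := by
      rw [hU2]
      apply (natDegree_sub_le _ _).trans
      have h1 : (2 * X * U ℝ ((n:ℤ)+1)).natDegree ≤ n+2 := by
        calc (2 * X * U ℝ ((n:ℤ)+1)).natDegree
            ≤ (2*X : ℝ[X]).natDegree + (U ℝ ((n:ℤ)+1)).natDegree := natDegree_mul_le
          _ ≤ 1 + (n+1) := by
              have h2 : (2*X : ℝ[X]).natDegree ≤ 1 := by
                apply natDegree_mul_le.trans
                simp
              omega
          _ = n + 2 := by omega
      omega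
    rw [hcast2]
    exact ⟨natDegree_eq_of_le_of_coeff_ne_zero hdegle (by rw [hcoeff]; positivity), hcoeff⟩


lemma poly_bound (p : ℝ[X]) : ∃ Cp : ℝ, 0 ≤ Cp ∧ ∀ t : ℝ, |t| ≤ 1 → |p.eval t| ≤ Cp := by
  refine ⟨∑ i ∈ Finset.range (p.natDegree + 1), |p.coeff i|,
    Finset.sum_nonneg fun i _ => abs_nonneg _, fun t ht => ?_⟩
  rw [Polynomial.eval_eq_sum_range]
  refine (Finset.abs_sum_le_sum_abs _ _).trans (Finset.sum_le_sum fun i _ => ?_)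
  rw [abs_mul, abs_pow]
  calc |p.coeff i| * |t|^i ≤ |p.coeff i| * 1 := by
        refine mul_le_mul_of_nonneg_left ?_ (abs_nonneg _)
        exact pow_le_one₀ (abs_nonneg t) ht
    _ = |p.coeff i| := mul_one _

lemma integrable_mul_poly {μ : Measure ℝ} (η : ℝ → ℝ) (hη : Integrable η μ) (p : ℝ[X]) :
    Integrable (fun y => η y * p.eval (Real.cos y)) μ := by
  obtain ⟨Cp, hCp0, hCp⟩ := poly_bound p
  have hmeas : AEStronglyMeasurable (fun y => p.eval (Real.cos y)) μ :=
    ((p.continuous_aeval).comp Real.continuous_cos).aestronglyMeasurable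
  have h := Integrable.bdd_mul (c := Cp) hη hmeas
    (ae_of_all μ fun y => by
      rw [Real.norm_eq_abs]
      exact hCp _ (abs_cos_le_one y))
  exact h.congr (ae_of_all μ fun y => by ring_nf)

open Polynomial.Chebyshev in
lemma span_poly (μ : Measure ℝ) (η : ℝ → ℝ) (hη : Integrable η μ)
    (h : ∀ n : ℕ, ∫ y, η y * (U ℝ (n:ℤ)).eval (Real.cos y) ∂μ = 0) :
    ∀ p : ℝ[X], ∫ y, η y * p.eval (Real.cos y) ∂μ = 0 := by
  have hint0 : ∫ y, η y ∂μ = 0 := by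
    have := h 0
    simpa [U_zero] using this
  suffices H : ∀ d : ℕ, ∀ p : ℝ[X], p.natDegree ≤ d → ∫ y, η y * p.eval (Real.cos y) ∂μ = 0 by
    intro p
    exact H p.natDegree p le_rfl
  intro d
  induction d with
  | zero =>
    intro p hp
    rw [Polynomial.eq_C_of_natDegree_le_zero hp]
    simp only [Polynomial.eval_C]
    rw [MeasureTheory.integral_mul_const, hint0, zero_mul]
  | succ d ih =>
    intro p hp
    by_cases hpd : p.natDegree ≤ d
    · exact ih p hpd
    · have hdeg : p.natDegree = d + 1 := by omega
      have hp0 : p ≠ 0 := fun h0 => by simp [h0] at hdeg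
      set k : ℝ := p.leadingCoeff / 2^(d+1) with hk
      have hlc : p.leadingCoeff ≠ 0 := Polynomial.leadingCoeff_ne_zero.2 hp0
      have hk0 : k ≠ 0 := div_ne_zero hlc (by positivity)
      set r : ℝ[X] := Polynomial.C k * U ℝ ((d+1 : ℕ) : ℤ) with hr
      have hUdeg := (U_deg (d+1)).1
      have hUcoeff := (U_deg (d+1)).2
      have hU0 : U ℝ ((d+1 : ℕ) : ℤ) ≠ 0 := fun h0 => by
        rw [h0] at hUcoeff
        simp at hUcoeff
        exact absurd hUcoeff (by positivity)
      have hrdeg : r.natDegree = d + 1 := by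
        rw [hr, Polynomial.natDegree_C_mul hk0, hUdeg]
      have hr0 : r ≠ 0 := by
        rw [hr]
        exact mul_ne_zero (by simpa using hk0) hU0
      have hrlc : r.leadingCoeff = p.leadingCoeff := by
        rw [Polynomial.leadingCoeff, hrdeg, hr, Polynomial.coeff_C_mul, hUcoeff, hk]
        field_simp
      set q : ℝ[X] := p - r with hq
      have hqdeg : q.natDegree ≤ d := by
        by_cases hq0 : q = 0
        · simp [hq0]
        · have hlt : q.degree < p.degree := by
            rw [hq]
            exact Polynomial.degree_sub_lt
              (by rw [Polynomial.degree_eq_natDegree hp0, Polynomial.degree_eq_natDegree hr0,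
                hdeg, hrdeg]) hp0 hrlc.symm
          have := Polynomial.natDegree_lt_natDegree hq0 hlt
          omega
      have hsplit : p = q + Polynomial.C k * U ℝ ((d+1 : ℕ) : ℤ) := by
        rw [hq, hr]
        ring
      have heval : ∀ y : ℝ, η y * p.eval (Real.cos y) =
          η y * q.eval (Real.cos y) + k * (η y * (U ℝ ((d+1 : ℕ) : ℤ)).eval (Real.cos y)) := by
        intro y
        conv_lhs => rw [hsplit]
        simp only [Polynomial.eval_add, Polynomial.eval_mul, Polynomial.eval_C]
        ring
      have hint1 := integrable_mul_poly η hη q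
      have hint2 := (integrable_mul_poly η hη (U ℝ ((d+1 : ℕ) : ℤ))).const_mul k
      calc ∫ y, η y * p.eval (Real.cos y) ∂μ
          = ∫ y, (η y * q.eval (Real.cos y)
              + k * (η y * (U ℝ ((d+1 : ℕ) : ℤ)).eval (Real.cos y))) ∂μ :=
            integral_congr_ae (ae_of_all μ heval)
        _ = (∫ y, η y * q.eval (Real.cos y) ∂μ)
              + ∫ y, k * (η y * (U ℝ ((d+1 : ℕ) : ℤ)).eval (Real.cos y)) ∂μ :=
            integral_add hint1 hint2
        _ = 0 := by
            rw [ih q hqdeg, MeasureTheory.integral_const_mul, h (d+1), mul_zero, add_zero]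


lemma cont_zero (μ : Measure ℝ) (η : ℝ → ℝ) (hη : Integrable η μ)
    (hsupp : ∀ᵐ y ∂μ, y ∈ Set.Icc 0 π)
    (hpoly : ∀ p : ℝ[X], ∫ y, η y * p.eval (Real.cos y) ∂μ = 0)
    (g : ℝ → ℝ) (hg : Continuous g) : ∫ y, η y * g y ∂μ = 0 := by
  set K := ∫ y, |η y| ∂μ with hKdef
  have hK0 : 0 ≤ K := integral_nonneg fun y => abs_nonneg _
  set f : ℝ → ℝ := fun t => g (Real.arccos t) with hf
  have hfc : Continuous f := hg.comp Real.continuous_arccos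
  have hbound : ∀ ε : ℝ, 0 < ε → |∫ y, η y * g y ∂μ| ≤ ε * K := by
    intro ε hε
    obtain ⟨p, hp⟩ := exists_polynomial_near_of_continuousOn (-1) 1 f hfc.continuousOn ε hε
    have hgmeas : AEStronglyMeasurable g μ := hg.aestronglyMeasurable
    obtain ⟨Cg, hCg⟩ : ∃ Cg, ∀ y ∈ Set.Icc (0:ℝ) π, ‖g y‖ ≤ Cg :=
      isCompact_Icc.exists_bound_of_continuousOn hg.continuousOn
    have hint1 : Integrable (fun y => g y * η y) μ :=
      hη.bdd_mul hgmeas (hsupp.mono fun y hy => hCg y hy)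
    have hint1' : Integrable (fun y => η y * g y) μ :=
      hint1.congr (ae_of_all μ fun y => by ring_nf)
    have hint2 := integrable_mul_poly η hη p
    have hdiff : (∫ y, η y * g y ∂μ) = ∫ y, η y * (g y - p.eval (Real.cos y)) ∂μ := by
      have he : (fun y => η y * (g y - p.eval (Real.cos y)))
          = fun y => η y * g y - η y * p.eval (Real.cos y) := funext fun y => by ring
      rw [he, integral_sub hint1' hint2, hpoly p, sub_zero]
    rw [hdiff]
    have hstep : |∫ y, η y * (g y - p.eval (Real.cos y)) ∂μ| ≤ ∫ y, |η y| * ε ∂μ := by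
      rw [← Real.norm_eq_abs]
      refine norm_integral_le_of_norm_le (hη.abs.mul_const ε) ?_
      filter_upwards [hsupp] with y hy
      rw [Real.norm_eq_abs, abs_mul]
      refine mul_le_mul_of_nonneg_left ?_ (abs_nonneg _)
      have hcos1 : Real.cos y ∈ Set.Icc (-1:ℝ) 1 := ⟨Real.neg_one_le_cos y, Real.cos_le_one y⟩
      have harc : Real.arccos (Real.cos y) = y := Real.arccos_cos hy.1 hy.2
      have hfy : f (Real.cos y) = g y := by rw [hf]; simp [harc]
      calc |g y - p.eval (Real.cos y)| = |p.eval (Real.cos y) - f (Real.cos y)| := by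
            rw [hfy, abs_sub_comm]
        _ ≤ ε := le_of_lt (hp (Real.cos y) hcos1)
    calc |∫ y, η y * (g y - p.eval (Real.cos y)) ∂μ| ≤ ∫ y, |η y| * ε ∂μ := hstep
      _ = K * ε := by rw [integral_mul_const]
      _ = ε * K := by ring
  have habs : |∫ y, η y * g y ∂μ| ≤ 0 := by
    refine le_of_forall_pos_le_add fun ε hε => ?_
    have h1 := hbound (ε/(K+1)) (by positivity)
    calc |∫ y, η y * g y ∂μ| ≤ (ε/(K+1)) * K := h1
      _ ≤ ε := by
          rw [div_mul_eq_mul_div, div_le_iff₀ (by linarith)]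
          nlinarith
      _ ≤ 0 + ε := by linarith
  exact abs_nonpos_iff.1 habs

lemma eta_zero (μ : Measure ℝ) (η : ℝ → ℝ) (hη : Integrable η μ)
    (hall : ∀ g : ℝ → ℝ, Continuous g → ∫ y, η y * g y ∂μ = 0) :
    ∀ᵐ y ∂μ, η y = 0 := by
  apply ae_eq_zero_of_integral_contDiff_smul_eq_zero hη.locallyIntegrable
  intro g hgdiff hgsupp
  rw [← hall g hgdiff.continuous]
  exact integral_congr_ae (ae_of_all μ fun y => by simp [smul_eq_mul]; ring)


end Stmt15Aux

open Stmt15Aux in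
/-- Condition (b) for the 1-D heat equation: if B_θ S(T−t) ξ = 0 (pointwise on θ,
with the spectral expansion of the heat semigroup) for all t ∈ [T−l, T] with
0 < l ≤ T, then ξ = 0 (a.e. on (0,π)). -/
theorem stmt_15 (ξ : ℝ → ℝ) (hξ : MemLp ξ 2 (volume.restrict (Set.Ioo 0 π)))
    (T l : ℝ) (hl : 0 < l) (hlT : l ≤ T) (θ : Set ℝ) (hθopen : IsOpen θ)
    (hθne : θ.Nonempty) (hθsub : θ ⊆ Set.Ioo 0 π)
    (h : ∀ t ∈ Set.Icc (T - l) T, ∀ x ∈ θ,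
      ∑' n : ℕ, Real.exp (-((n : ℝ) + 1) ^ 2 * (T - t)) *
        (∫ y in (0:ℝ)..π, ξ y * Real.sin (((n : ℝ) + 1) * y)) *
        Real.sin (((n : ℝ) + 1) * x) = 0) :
    ξ =ᵐ[volume.restrict (Set.Ioo 0 π)] 0 := by
  have hμfin : IsFiniteMeasure (volume.restrict (Set.Ioo 0 π)) := by
    constructor
    rw [Measure.restrict_apply_univ, Real.volume_Ioo]
    exact ENNReal.ofReal_lt_top
  set μ := volume.restrict (Set.Ioo 0 π) with hμdef
  have hξint : Integrable ξ μ := hξ.integrable one_le_two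
  have hsin_int : ∀ r : ℝ, Integrable (fun y => ξ y * Real.sin (r * y)) μ := by
    intro r
    have hm : AEStronglyMeasurable (fun y => Real.sin (r * y)) μ :=
      (Real.continuous_sin.comp (continuous_const.mul continuous_id)).aestronglyMeasurable
    have h1 : Integrable (fun y => Real.sin (r * y) * ξ y) μ :=
      hξint.bdd_mul (c := 1) hm (ae_of_all μ fun y => by
        rw [Real.norm_eq_abs]; exact abs_le.2 ⟨Real.neg_one_le_sin _, Real.sin_le_one _⟩)
    exact h1.congr (ae_of_all μ fun y => by ring)
  set c : ℕ → ℝ := fun n => ∫ y in (0:ℝ)..π, ξ y * Real.sin (((n:ℝ)+1) * y) with hcdef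
  have hc_eq : ∀ n : ℕ, c n = ∫ y, ξ y * Real.sin (((n:ℝ)+1) * y) ∂μ := by
    intro n
    rw [hcdef]
    simp only []
    rw [intervalIntegral.integral_of_le Real.pi_pos.le,
      MeasureTheory.integral_Ioc_eq_integral_Ioo]
  set C : ℝ := ∫ y, |ξ y| ∂μ with hCdef
  have hcC : ∀ n, |c n| ≤ C := by
    intro n
    rw [hc_eq n, ← Real.norm_eq_abs]
    refine norm_integral_le_of_norm_le hξint.abs (ae_of_all μ fun y => ?_)
    rw [Real.norm_eq_abs, abs_mul]
    exact mul_le_of_le_one_right (abs_nonneg _) (abs_le.2 ⟨Real.neg_one_le_sin _, Real.sin_le_one _⟩)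
  have habs_a : ∀ x : ℝ, ∀ n : ℕ, |c n * Real.sin (((n:ℝ)+1) * x)| ≤ C := by
    intro x n
    rw [abs_mul]
    exact le_trans (mul_le_of_le_one_right (abs_nonneg _) (abs_le.2 ⟨Real.neg_one_le_sin _, Real.sin_le_one _⟩)) (hcC n)
  have hvan : ∀ x ∈ θ, ∀ s ∈ Set.Ioc (0:ℝ) l,
      ∑' n, (c n * Real.sin (((n:ℝ)+1) * x)) * W n s = 0 := by
    intro x hx s hs
    have ht : T - s ∈ Set.Icc (T-l) T := ⟨by linarith [hs.2], by linarith [hs.1]⟩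
    have h0 := h (T - s) ht x hx
    have hTs : T - (T - s) = s := by ring
    rw [hTs] at h0
    rw [← h0]
    refine tsum_congr fun n => ?_
    rw [hcdef]
    unfold Stmt15Aux.W
    ring
  have hczero : ∀ n, c n = 0 := by
    intro n
    obtain ⟨x, hxθ, hsinx⟩ := exists_sin_ne θ hθopen hθne ((n:ℝ)+1) (by positivity)
    have hall := vanish_all (fun m => c m * Real.sin (((m:ℝ)+1) * x)) C (habs_a x) hl
      (hvan x hxθ)
    have := coeff_zero (fun m => c m * Real.sin (((m:ℝ)+1) * x)) C (habs_a x) hall n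
    exact (mul_eq_zero.1 this).resolve_right hsinx
  set η : ℝ → ℝ := fun y => ξ y * Real.sin y with hηdef
  have hηint : Integrable η μ := by
    have := hsin_int 1
    refine this.congr (ae_of_all μ fun y => ?_)
    rw [hηdef]
    simp
  have hU : ∀ n : ℕ, ∫ y, η y * (Polynomial.Chebyshev.U ℝ (n:ℤ)).eval (Real.cos y) ∂μ = 0 := by
    intro n
    have hpt : ∀ y : ℝ, η y * (Polynomial.Chebyshev.U ℝ (n:ℤ)).eval (Real.cos y)
        = ξ y * Real.sin (((n:ℝ)+1) * y) := by
      intro y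
      have hcu := Polynomial.Chebyshev.U_real_cos y (n:ℤ)
      push_cast at hcu
      calc η y * (Polynomial.Chebyshev.U ℝ (n:ℤ)).eval (Real.cos y)
          = ξ y * ((Polynomial.Chebyshev.U ℝ (n:ℤ)).eval (Real.cos y) * Real.sin y) := by
            rw [hηdef]; ring
        _ = ξ y * Real.sin (((n:ℝ)+1) * y) := by rw [hcu]
    rw [integral_congr_ae (ae_of_all μ hpt), ← hc_eq n]
    exact hczero n
  have hsupp : ∀ᵐ y ∂μ, y ∈ Set.Icc 0 π := by
    have := ae_restrict_mem (μ := volume) (s := Set.Ioo 0 π) measurableSet_Ioo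
    exact this.mono fun y hy => ⟨hy.1.le, hy.2.le⟩
  have hη0 : ∀ᵐ y ∂μ, η y = 0 :=
    eta_zero μ η hηint (cont_zero μ η hηint hsupp (span_poly μ η hηint hU))
  have hmem : ∀ᵐ y ∂μ, y ∈ Set.Ioo 0 π :=
    ae_restrict_mem (μ := volume) (s := Set.Ioo 0 π) measurableSet_Ioo
  filter_upwards [hη0, hmem] with y h1 h2
  have hsy : Real.sin y ≠ 0 := ne_of_gt (Real.sin_pos_of_pos_of_lt_pi h2.1 h2.2)
  have h3 : ξ y * Real.sin y = 0 := h1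
  have := (mul_eq_zero.1 h3).resolve_right hsy
  simpa using this
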